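/- For each x ∈ X and each k ∈ ℕ there exists a unique partition of ℤ into consecutive intervals of length 2^{k+1} — i.e., a unique offset r ∈ {0,…,2^{k+1}−1}, the intervals being [r + m·2^{k+1}, r + (m+1)·2^{k+1}) for m ∈ ℤ — such that the subword of x on each interval of the partition is either u_k ū_k or ū_k u_k. -/

import Mathlib

/-- The substitution σ on symbols: σ(0) = 01, σ(1) = 10 (with 0 ↔ `false`, 1 ↔ `true`). -/
def sigmaSub (b : Bool) : List Bool := [b, !b]

/-- The substitution σ extended to words by concatenation. -/
def subst (w : List Bool) : List Bool := w.flatMap sigmaSub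

/-- The flip of a binary word: exchange 0 and 1 in every position. -/
def flipWord (w : List Bool) : List Bool := w.map (fun b => !b)

/-- u_k = σ^k(0). -/
def uWord : ℕ → List Bool
  | 0 => [false]
  | k + 1 => subst (uWord k)

/-- The Morse sequence: its first 2^k symbols form the word u_k for every k. -/
def morse (n : ℕ) : Bool := (uWord (n + 1)).getD n false

/-- The subword of `x` on the interval `[p, p + w.length)` is the word `w`. -/
def readsWord (x : ℤ → Bool) (p : ℤ) (w : List Bool) : Prop :=
  ∀ j : ℕ, j < w.length → x (p + j) = w.getD j false

/-- The Morse minimal set X: bi-infinite sequences all of whose finite subwords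
occur in the Morse sequence. -/
def morseShiftX : Set (ℤ → Bool) :=
  {x | ∀ (a : ℤ) (l : ℕ), ∃ s : ℕ, ∀ j : ℕ, j < l → x (a + j) = morse (s + j)}

/-- The left shift T. -/
def shiftT (x : ℤ → Bool) : ℤ → Bool := fun i => x (i + 1)


lemma subst_cons (a : Bool) (w : List Bool) : subst (a :: w) = a :: ((!a) :: subst w) := rfl

lemma subst_append (u v : List Bool) : subst (u ++ v) = subst u ++ subst v := by
  simp [subst]

lemma subst_length (w : List Bool) : (subst w).length = 2 * w.length := by
  induction w with
  | nil => rfl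
  | cons a w ih => rw [subst_cons]; simp [ih]; ring

lemma flip_append (u v : List Bool) : flipWord (u ++ v) = flipWord u ++ flipWord v := by
  simp [flipWord]

lemma flip_flip' (w : List Bool) : flipWord (flipWord w) = w := by
  simp [flipWord]
  have : ((fun b : Bool => !b) ∘ fun b => !b) = id := by funext b; simp
  rw [this, List.map_id]

lemma flip_length (w : List Bool) : (flipWord w).length = w.length := by simp [flipWord]

lemma subst_flip (w : List Bool) : subst (flipWord w) = flipWord (subst w) := by
  induction w with
  | nil => rfl
  | cons a w ih =>
    show subst ((!a) :: flipWord w) = _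
    rw [subst_cons, subst_cons]
    simp [flipWord] at *
    exact ih

lemma uWord_succ (k : ℕ) : uWord (k + 1) = uWord k ++ flipWord (uWord k) := by
  induction k with
  | zero => rfl
  | succ k ih =>
    show subst (uWord (k+1)) = _
    conv_lhs => rw [ih]
    rw [subst_append, subst_flip]
    rfl

lemma uWord_length (k : ℕ) : (uWord k).length = 2 ^ k := by
  induction k with
  | zero => rfl
  | succ k ih => show (subst _).length = _; rw [subst_length, ih]; ring

lemma uWord_ne_nil (k : ℕ) : uWord k ≠ [] := by
  intro h
  have := uWord_length k
  rw [h] at this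
  simp at this
  exact absurd this.symm (by positivity)

lemma uWord_getD_zero (k : ℕ) : (uWord k).getD 0 false = false := by
  induction k with
  | zero => rfl
  | succ k ih =>
    rw [uWord_succ]
    cases h : uWord k with
    | nil => exact absurd h (uWord_ne_nil k)
    | cons a w => rw [h] at ih; simpa using ih

lemma flip_getD (w : List Bool) (j : ℕ) (h : j < w.length) :
    (flipWord w).getD j false = !(w.getD j false) := by
  simp only [flipWord, List.getD_eq_getElem?_getD]
  rw [List.getElem?_eq_getElem (by simpa using h), List.getElem?_eq_getElem h]
  simp

lemma subst_getD_even (w : List Bool) (n : ℕ) (h : n < w.length) :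
    (subst w).getD (2 * n) false = w.getD n false := by
  induction w generalizing n with
  | nil => simp at h
  | cons a w ih =>
    rw [subst_cons]
    cases n with
    | zero => simp
    | succ n =>
      have : 2 * (n + 1) = (2 * n) + 1 + 1 := by ring
      rw [this]
      simp only [List.getD_cons_succ]
      exact ih n (by simpa using h)

lemma subst_getD_odd (w : List Bool) (n : ℕ) (h : n < w.length) :
    (subst w).getD (2 * n + 1) false = !(w.getD n false) := by
  induction w generalizing n with
  | nil => simp at h
  | cons a w ih =>
    rw [subst_cons]
    cases n with
    | zero => simp
    | succ n =>
      have : 2 * (n + 1) + 1 = (2 * n + 1) + 1 + 1 := by ring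
      rw [this]
      simp only [List.getD_cons_succ]
      exact ih n (by simpa using h)

lemma uWord_getD_stable (K n : ℕ) (h : n < 2 ^ K) :
    (uWord (K + 1)).getD n false = (uWord K).getD n false := by
  rw [uWord_succ]
  exact List.getD_append _ _ _ _ (by rw [uWord_length]; exact h)

lemma uWord_getD_stable' (K d n : ℕ) (h : n < 2 ^ K) :
    (uWord (K + d)).getD n false = (uWord K).getD n false := by
  induction d with
  | zero => rfl
  | succ d ih =>
    have : n < 2 ^ (K + d) := lt_of_lt_of_le h (Nat.pow_le_pow_right (by norm_num) (by omega))
    rw [show K + (d+1) = (K+d) + 1 from rfl, uWord_getD_stable (K+d) n this, ih]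

lemma morse_eq_getD (K n : ℕ) (h : n < 2 ^ K) :
    morse n = (uWord K).getD n false := by
  unfold morse
  rcases le_total K (n + 1) with hle | hle
  · obtain ⟨d, hd⟩ := Nat.exists_eq_add_of_le hle
    rw [hd]
    exact uWord_getD_stable' K d n h
  · obtain ⟨d, hd⟩ := Nat.exists_eq_add_of_le hle
    rw [hd]
    exact (uWord_getD_stable' (n+1) d n (lt_trans ((Nat.lt_two_pow_self (n := n))) (Nat.pow_lt_pow_right (by norm_num) (by omega)))).symm

lemma morse_double (n : ℕ) : morse (2 * n) = morse n := by
  have h : n < 2 ^ (n + 1) := lt_trans ((Nat.lt_two_pow_self (n := n))) (Nat.pow_lt_pow_right (by norm_num) (by omega))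
  have h2 : 2 * n < 2 ^ (n + 2) := by
    have := (Nat.lt_two_pow_self (n := n))
    calc 2 * n < 2 * 2 ^ (n+1) := by omega
    _ = 2 ^ (n+2) := by ring
  rw [morse_eq_getD (n+2) (2*n) h2, morse_eq_getD (n+1) n h]
  show (subst (uWord (n+1))).getD (2*n) false = _
  exact subst_getD_even _ n (by rw [uWord_length]; exact h)

lemma morse_double_one (n : ℕ) : morse (2 * n + 1) = !(morse n) := by
  have h : n < 2 ^ (n + 1) := lt_trans ((Nat.lt_two_pow_self (n := n))) (Nat.pow_lt_pow_right (by norm_num) (by omega))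
  have h2 : 2 * n + 1 < 2 ^ (n + 2) := by
    have := (Nat.lt_two_pow_self (n := n))
    have : 2 * n + 1 < 2 * 2 ^ (n+1) := by omega
    calc 2 * n + 1 < 2 * 2 ^ (n+1) := this
    _ = 2 ^ (n+2) := by ring
  rw [morse_eq_getD (n+2) (2*n+1) h2, morse_eq_getD (n+1) n h]
  show (subst (uWord (n+1))).getD (2*n+1) false = _
  exact subst_getD_odd _ n (by rw [uWord_length]; exact h)

lemma morse_alt (n : ℕ) : morse (2 * n) ≠ morse (2 * n + 1) := by
  rw [morse_double, morse_double_one]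
  simp

lemma alt_eval (g : ℕ → Bool) (n : ℕ) (h : ∀ r < n, g r ≠ g (r + 1)) :
    (g n = g 0 ↔ Even n) := by
  induction n with
  | zero => simp
  | succ n ih =>
    have h1 : g (n+1) = !(g n) := by
      have hn := h n (by omega)
      cases hgn : g n <;> cases hgn1 : g (n+1) <;> simp_all
    have ihn := ih (fun r hr => h r (by omega))
    rw [h1, Nat.even_add_one, ← ihn]
    cases g n <;> cases g 0 <;> simp

/-- Thue: the Morse sequence is overlap-free. -/
lemma morse_no_overlap : ∀ p : ℕ, 1 ≤ p → ∀ s : ℕ, ¬ (∀ i ≤ p, morse (s + i) = morse (s + p + i)) := by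
  intro p
  induction p using Nat.strong_induction_on with
  | _ p IH =>
    intro hp s H
    rcases Nat.even_or_odd p with ⟨q, hq⟩ | ⟨c, hc⟩
    · -- p even, p = q + q
      have hq1 : 1 ≤ q := by omega
      rcases Nat.even_or_odd s with ⟨a, ha⟩ | ⟨a, ha⟩
      · refine IH q (by omega) hq1 a ?_
        intro i hi
        have h1 : morse (a + i) = morse (s + 2 * i) := by
          rw [show s + 2 * i = 2 * (a + i) by omega, morse_double]
        have h2 : morse (a + q + i) = morse (s + p + 2 * i) := by
          rw [show s + p + 2 * i = 2 * (a + q + i) by omega, morse_double]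
        rw [h1, h2, H (2 * i) (by omega)]
      · -- s odd, s = 2a + 1; use odd positions s + 2i = 2(a+i)+1
        refine IH q (by omega) hq1 a ?_
        intro i hi
        have h1 : morse (a + i) = !(morse (s + 2 * i)) := by
          rw [show s + 2 * i = 2 * (a + i) + 1 by omega, morse_double_one]
          simp
        have h2 : morse (a + q + i) = !(morse (s + p + 2 * i)) := by
          rw [show s + p + 2 * i = 2 * (a + q + i) + 1 by omega, morse_double_one]
          simp
        rw [h1, h2, H (2 * i) (by omega)]
    · -- p odd
      have alt : ∀ r < 2 * p, morse (s + r) ≠ morse (s + r + 1) := by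
        intro r hr
        rcases Nat.even_or_odd (s + r) with ⟨m, hm⟩ | ⟨m, hm⟩
        · rw [show s + r = 2 * m by omega]
          exact morse_alt m
        · -- s + r odd
          rcases lt_or_ge r p with hrp | hrp
          · have h1 : morse (s + r) = morse (s + r + p) := by
              rw [show s + r + p = s + p + r by omega]; exact H r (by omega)
            have h2 : morse (s + r + 1) = morse (s + r + p + 1) := by
              rw [show s + r + p + 1 = s + p + (r+1) by omega]; exact H (r+1) (by omega)
            rw [h1, h2, show s + r + p = 2 * (m + c + 1) by omega]
            exact morse_alt (m + c + 1)
          · have h1 : morse (s + (r - p)) = morse (s + r) := by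
              rw [show s + r = s + p + (r - p) by omega]; exact H (r - p) (by omega)
            have h2 : morse (s + (r - p) + 1) = morse (s + r + 1) := by
              rw [show s + r + 1 = s + p + (r - p + 1) by omega,
                show s + (r - p) + 1 = s + (r - p + 1) by omega]
              exact H (r - p + 1) (by omega)
            rw [← h1, ← h2, show s + (r - p) = 2 * (m - c) by omega]
            exact morse_alt (m - c)
      have key := alt_eval (fun r => morse (s + r)) p (fun r hr => alt r (by omega))
      have h0 := H 0 (by omega)
      have hep : Even p := key.mp (by simpa using h0.symm)
      obtain ⟨e, he⟩ := hep
      omega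

lemma readsWord_append {x : ℤ → Bool} {p : ℤ} {u v : List Bool} :
    readsWord x p (u ++ v) ↔ readsWord x p u ∧ readsWord x (p + u.length) v := by
  constructor
  · intro h
    constructor
    · intro j hj
      have := h j (by simp; omega)
      rwa [List.getD_append _ _ _ _ hj] at this
    · intro j hj
      have := h (u.length + j) (by simp; omega)
      rw [List.getD_append_right _ _ _ _ (by omega)] at this
      simp only [Nat.add_sub_cancel_left] at this
      rw [← this]
      congr 1
      push_cast
      ring
  · rintro ⟨h1, h2⟩ j hj
    rcases lt_or_ge j u.length with hju | hju
    · rw [List.getD_append _ _ _ _ hju]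
      exact h1 j hju
    · rw [List.getD_append_right _ _ _ _ hju]
      have := h2 (j - u.length) (by simp at hj; omega)
      rw [← this]
      congr 1
      push_cast [Nat.cast_sub hju]
      ring

lemma readsWord_pos_congr {x : ℤ → Bool} {p q : ℤ} {w : List Bool} (h : p = q) :
    readsWord x p w ↔ readsWord x q w := by rw [h]

lemma period_getD (D : List Bool) (c : Bool) (i : ℕ) (hi : i ≤ D.length)
    (hc : D.getD 0 false = c) (hne : D ≠ []) :
    (D ++ (D ++ [c])).getD i false = (D ++ (D ++ [c])).getD (i + D.length) false := by
  have hr1 : (D ++ (D ++ [c])).getD (i + D.length) false = (D ++ [c]).getD i false := by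
    rw [List.getD_append_right _ _ _ _ (by omega)]
    congr 1
    omega
  rw [hr1]
  rcases lt_or_ge i D.length with hip | hip
  · rw [List.getD_append _ _ _ _ (by omega), List.getD_append _ _ _ _ (by omega)]
  · have hieq : i = D.length := by omega
    subst hieq
    have hR : (D ++ [c]).getD D.length false = c := by
      rw [List.getD_append_right _ _ _ _ (le_refl _), Nat.sub_self]
      rfl
    have hL : (D ++ (D ++ [c])).getD D.length false = c := by
      rw [List.getD_append_right _ _ _ _ (le_refl _), Nat.sub_self,
        List.getD_append _ _ _ _ (List.length_pos_iff.mpr hne), hc]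
    rw [hR, hL]

/-- x contains no overlap c w c w c. -/
lemma x_no_overlap {x : ℤ → Bool} (hx : x ∈ morseShiftX) (p : ℤ) (c : Bool) (w : List Bool) :
    ¬ readsWord x p ([c] ++ w ++ [c] ++ w ++ [c]) := by
  intro hr
  have hW0 : [c] ++ w ++ [c] ++ w ++ [c] = (c :: w) ++ ((c :: w) ++ [c]) := by simp
  rw [hW0] at hr
  have hper := fun i hi => period_getD (c :: w) c i hi rfl (by simp)
  obtain ⟨s, hs⟩ := hx p ((c :: w) ++ ((c :: w) ++ [c])).length
  have hmorse : ∀ j : ℕ, j < ((c :: w) ++ ((c :: w) ++ [c])).length →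
      morse (s + j) = ((c :: w) ++ ((c :: w) ++ [c])).getD j false := by
    intro j hj
    rw [← hs j hj]
    exact hr j hj
  have hlen : ((c :: w) ++ ((c :: w) ++ [c])).length = 2 * (w.length + 1) + 1 := by
    simp; omega
  refine morse_no_overlap (w.length + 1) (by omega) s ?_
  intro i hi
  have hi' : i ≤ (c :: w).length := by simp; omega
  rw [hmorse i (by omega), show s + (w.length + 1) + i = s + (i + (c :: w).length) by simp; omega,
    hmorse (i + (c :: w).length) (by simp; omega)]
  exact hper i hi'

lemma bool_ne_eq_not {y z : Bool} (h : y ≠ z) : z = !y := by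
  cases y <;> cases z <;> simp_all

/-- no overlap C V C V C with C nonempty, in x. -/
lemma x_no_overlap_words {x : ℤ → Bool} (hx : x ∈ morseShiftX) (p : ℤ) (C V : List Bool)
    (hC : C ≠ []) : ¬ readsWord x p (C ++ V ++ C ++ V ++ C) := by
  intro h
  obtain ⟨c, c', rfl⟩ : ∃ c c', C = c :: c' := by
    cases C with
    | nil => exact absurd rfl hC
    | cons a t => exact ⟨a, t, rfl⟩
  refine x_no_overlap hx p c (c' ++ V) ?_
  have h2 : readsWord x p (([c] ++ (c' ++ V) ++ [c] ++ (c' ++ V) ++ [c]) ++ c') := by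
    rw [show ([c] ++ (c' ++ V) ++ [c] ++ (c' ++ V) ++ [c]) ++ c'
        = (c :: c') ++ V ++ (c :: c') ++ V ++ (c :: c') by simp]
    exact h
  exact (readsWord_append.mp h2).1

def PProp (x : ℤ → Bool) (n : ℕ) (r : ℤ) : Prop :=
  ∀ m : ℤ, readsWord x (r + m * 2 ^ n) (uWord n) ∨
    readsWord x (r + m * 2 ^ n) (flipWord (uWord n))

lemma flip_uWord_succ (k : ℕ) : flipWord (uWord (k+1)) = flipWord (uWord k) ++ uWord k := by
  rw [uWord_succ, flip_append, flip_flip']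

lemma flip_getD_zero (k : ℕ) : (flipWord (uWord k)).getD 0 false = true := by
  rw [flip_getD _ 0 (by rw [uWord_length]; positivity), uWord_getD_zero]
  rfl

lemma uWord_length_pos (k : ℕ) : 0 < (uWord k).length := by rw [uWord_length]; positivity

lemma lenU_cast (n : ℕ) : (((uWord n).length : ℤ)) = 2 ^ n := by
  rw [uWord_length]; push_cast; ring

lemma lenF_cast (n : ℕ) : (((flipWord (uWord n)).length : ℤ)) = 2 ^ n := by
  rw [flip_length]; exact lenU_cast n

section Step

variable {x : ℤ → Bool} (hx : x ∈ morseShiftX) (n : ℕ) (r : ℕ)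

/-- block word of given type -/
def blockW (n : ℕ) (β : Bool) : List Bool := if β then flipWord (uWord n) else uWord n

lemma blockW_ne (n : ℕ) (β : Bool) : blockW n β ≠ [] := by
  have h1 : (blockW n β).length = 2 ^ n := by
    cases β <;> simp only [blockW, if_true, if_false, flip_length] <;> exact uWord_length n
  intro h
  rw [h] at h1
  simp at h1
  exact absurd h1.symm (by positivity)

lemma blockW_len_cast (n : ℕ) (β : Bool) : (((blockW n β).length : ℤ)) = 2 ^ n := by
  cases β
  · simpa only [blockW, if_neg (by simp : ¬ (false = true))] using lenU_cast n
  · simpa only [blockW, if_pos rfl, if_true] using lenF_cast n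

end Step

def bSeq (x : ℤ → Bool) (n : ℕ) (r : ℤ) (m : ℤ) : Bool := x (r + m * 2 ^ n)

section Step2

variable {x : ℤ → Bool} {n : ℕ} {r : ℤ}

lemma readU_imp {m : ℤ} (h : readsWord x (r + m * 2 ^ n) (uWord n)) :
    bSeq x n r m = false := by
  have h0 := h 0 (uWord_length_pos n)
  rw [Nat.cast_zero, add_zero, uWord_getD_zero] at h0
  exact h0

lemma readF_imp {m : ℤ} (h : readsWord x (r + m * 2 ^ n) (flipWord (uWord n))) :
    bSeq x n r m = true := by
  have h0 := h 0 (by rw [flip_length]; exact uWord_length_pos n)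
  rw [Nat.cast_zero, add_zero, flip_getD_zero] at h0
  exact h0

lemma blockRead (hP : PProp x n r) (m : ℤ) :
    readsWord x (r + m * 2 ^ n) (blockW n (bSeq x n r m)) := by
  rcases hP m with h | h
  · rw [readU_imp h]
    simpa [blockW] using h
  · rw [readF_imp h]
    simpa [blockW] using h

lemma readU_of (hP : PProp x n r) {m : ℤ} (h : bSeq x n r m = false) :
    readsWord x (r + m * 2 ^ n) (uWord n) := by
  have := blockRead hP m
  rw [h] at this
  simpa [blockW] using this

lemma readF_of (hP : PProp x n r) {m : ℤ} (h : bSeq x n r m = true) :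
    readsWord x (r + m * 2 ^ n) (flipWord (uWord n)) := by
  have := blockRead hP m
  rw [h] at this
  simpa [blockW] using this

lemma reads_block_seq (hP : PProp x n r) : ∀ (L : List Bool) (m : ℤ),
    (∀ i : ℕ, i < L.length → bSeq x n r (m + i) = L.getD i false) →
    readsWord x (r + m * 2 ^ n) (L.flatMap (blockW n)) := by
  intro L
  induction L with
  | nil => intro m _ j hj; simp at hj
  | cons β L ih =>
    intro m hL
    rw [List.flatMap_cons, readsWord_append]
    constructor
    · have h0 := hL 0 (by simp)
      rw [Nat.cast_zero, add_zero, List.getD_cons_zero] at h0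
      have := blockRead hP m
      rwa [h0] at this
    · rw [readsWord_pos_congr (show r + m * 2^n + ((blockW n β).length : ℤ)
        = r + (m + 1) * 2 ^ n by rw [blockW_len_cast]; ring)]
      apply ih (m + 1)
      intro i hi
      have := hL (i + 1) (by simp; omega)
      rwa [show (m + ((i + 1 : ℕ) : ℤ)) = (m + 1) + (i : ℤ) by push_cast; ring,
        List.getD_cons_succ] at this

lemma noTriple (hx : x ∈ morseShiftX) (hP : PProp x n r) (m : ℤ)
    (h1 : bSeq x n r m = bSeq x n r (m + 1)) (h2 : bSeq x n r (m + 1) = bSeq x n r (m + 2)) :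
    False := by
  set β := bSeq x n r m with hβ
  have hL : ∀ i : ℕ, i < ([β, β, β] : List Bool).length →
      bSeq x n r (m + i) = ([β, β, β] : List Bool).getD i false := by
    intro i hi
    simp only [List.length_cons, List.length_nil] at hi
    rcases i with _ | _ | _ | i
    · simpa using hβ.symm
    · rw [show m + ((1:ℕ):ℤ) = m + 1 by norm_num]
      simpa using h1.symm
    · rw [show m + ((2:ℕ):ℤ) = m + 2 by norm_num]
      simpa using (h1.trans h2).symm
    · omega
  have hread := reads_block_seq hP [β, β, β] m hL
  apply x_no_overlap_words hx (r + m * 2 ^ n) (blockW n β) [] (blockW_ne n β)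
  rw [show blockW n β ++ [] ++ blockW n β ++ [] ++ blockW n β
    = ([β, β, β] : List Bool).flatMap (blockW n) by simp]
  exact hread

lemma noAlt5 (hx : x ∈ morseShiftX) (hP : PProp x n r) (m : ℤ)
    (h1 : bSeq x n r m ≠ bSeq x n r (m + 1)) (h2 : bSeq x n r (m + 1) ≠ bSeq x n r (m + 2))
    (h3 : bSeq x n r (m + 2) ≠ bSeq x n r (m + 3)) (h4 : bSeq x n r (m + 3) ≠ bSeq x n r (m + 4)) :
    False := by
  set β := bSeq x n r m with hβ
  have e1 : bSeq x n r (m + 1) = !β := bool_ne_eq_not h1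
  have e2 : bSeq x n r (m + 2) = β := by rw [bool_ne_eq_not h2, e1, Bool.not_not]
  have e3 : bSeq x n r (m + 3) = !β := by rw [bool_ne_eq_not h3, e2]
  have e4 : bSeq x n r (m + 4) = β := by rw [bool_ne_eq_not h4, e3, Bool.not_not]
  have hL : ∀ i : ℕ, i < ([β, !β, β, !β, β] : List Bool).length →
      bSeq x n r (m + i) = ([β, !β, β, !β, β] : List Bool).getD i false := by
    intro i hi
    simp only [List.length_cons, List.length_nil] at hi
    rcases i with _ | _ | _ | _ | _ | i
    · simpa using hβ.symm
    · rw [show m + ((1:ℕ):ℤ) = m + 1 by norm_num]; simpa using e1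
    · rw [show m + ((2:ℕ):ℤ) = m + 2 by norm_num]; simpa using e2
    · rw [show m + ((3:ℕ):ℤ) = m + 3 by norm_num]; simpa using e3
    · rw [show m + ((4:ℕ):ℤ) = m + 4 by norm_num]; simpa using e4
    · omega
  have hread := reads_block_seq hP [β, !β, β, !β, β] m hL
  apply x_no_overlap_words hx (r + m * 2 ^ n) (blockW n β) (blockW n (!β)) (blockW_ne n β)
  rw [show blockW n β ++ blockW n (!β) ++ blockW n β ++ blockW n (!β) ++ blockW n β
    = ([β, !β, β, !β, β] : List Bool).flatMap (blockW n) by simp]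
  exact hread

lemma noPattern7 (hx : x ∈ morseShiftX) (hP : PProp x n r) (m : ℤ)
    (h0 : bSeq x n r m ≠ bSeq x n r (m + 1)) (h1 : bSeq x n r (m + 1) = bSeq x n r (m + 2))
    (h2 : bSeq x n r (m + 2) ≠ bSeq x n r (m + 3)) (h3 : bSeq x n r (m + 3) ≠ bSeq x n r (m + 4))
    (h4 : bSeq x n r (m + 4) = bSeq x n r (m + 5)) (h5 : bSeq x n r (m + 5) ≠ bSeq x n r (m + 6)) :
    False := by
  set β := bSeq x n r m with hβ
  have e1 : bSeq x n r (m + 1) = !β := bool_ne_eq_not h0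
  have e2 : bSeq x n r (m + 2) = !β := h1 ▸ e1
  have e3 : bSeq x n r (m + 3) = β := by rw [bool_ne_eq_not h2, e2, Bool.not_not]
  have e4 : bSeq x n r (m + 4) = !β := by rw [bool_ne_eq_not h3, e3]
  have e5 : bSeq x n r (m + 5) = !β := h4 ▸ e4
  have e6 : bSeq x n r (m + 6) = β := by rw [bool_ne_eq_not h5, e5, Bool.not_not]
  have hL : ∀ i : ℕ, i < ([β, !β, !β, β, !β, !β, β] : List Bool).length →
      bSeq x n r (m + i) = ([β, !β, !β, β, !β, !β, β] : List Bool).getD i false := by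
    intro i hi
    simp only [List.length_cons, List.length_nil] at hi
    rcases i with _ | _ | _ | _ | _ | _ | _ | i
    · simpa using hβ.symm
    · rw [show m + ((1:ℕ):ℤ) = m + 1 by norm_num]; simpa using e1
    · rw [show m + ((2:ℕ):ℤ) = m + 2 by norm_num]; simpa using e2
    · rw [show m + ((3:ℕ):ℤ) = m + 3 by norm_num]; simpa using e3
    · rw [show m + ((4:ℕ):ℤ) = m + 4 by norm_num]; simpa using e4
    · rw [show m + ((5:ℕ):ℤ) = m + 5 by norm_num]; simpa using e5
    · rw [show m + ((6:ℕ):ℤ) = m + 6 by norm_num]; simpa using e6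
    · omega
  have hread := reads_block_seq hP [β, !β, !β, β, !β, !β, β] m hL
  apply x_no_overlap_words hx (r + m * 2 ^ n) (blockW n β) (blockW n (!β) ++ blockW n (!β))
    (blockW_ne n β)
  rw [show blockW n β ++ (blockW n (!β) ++ blockW n (!β)) ++ blockW n β
      ++ (blockW n (!β) ++ blockW n (!β)) ++ blockW n β
    = ([β, !β, !β, β, !β, !β, β] : List Bool).flatMap (blockW n) by simp]
  exact hread

end Step2

section Step3

variable {x : ℤ → Bool} {n : ℕ} {r : ℤ}

lemma no_odd_equal (hx : x ∈ morseShiftX) (hP : PProp x n r) :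
    ∀ d : ℕ, Odd d → ∀ m : ℤ, bSeq x n r m = bSeq x n r (m + 1) →
      bSeq x n r (m + d) = bSeq x n r (m + d + 1) → False := by
  intro d
  induction d using Nat.strong_induction_on with
  | _ d IH =>
    intro hodd m hm hd
    by_cases hmid : ∃ j : ℕ, 0 < j ∧ j < d ∧ bSeq x n r (m + j) = bSeq x n r (m + j + 1)
    · obtain ⟨j, hj0, hjd, hbj⟩ := hmid
      rcases Nat.even_or_odd j with hev | hoddj
      · have hcast : ((d - j : ℕ) : ℤ) = (d : ℤ) - (j : ℤ) := by
          push_cast [Nat.cast_sub hjd.le]; ring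
        refine IH (d - j) (by omega) ?_ (m + j) hbj ?_
        · rcases hodd with ⟨c, hc⟩; rcases hev with ⟨e, he⟩; exact ⟨c - e, by omega⟩
        · rw [show m + (j : ℤ) + ((d - j : ℕ) : ℤ) = m + (d : ℤ) by rw [hcast]; ring]
          exact hd
      · exact IH j hjd hoddj m hm hbj
    · push_neg at hmid
      have hd15 : d = 1 ∨ d = 3 ∨ 5 ≤ d := by rcases hodd with ⟨c, hc⟩; omega
      rcases hd15 with rfl | rfl | h5
      · refine noTriple hx hP m hm ?_
        rwa [show m + ((1:ℕ):ℤ) = m + 1 by norm_num,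
          show m + 1 + 1 = m + 2 by ring] at hd
      · -- d = 3
        rw [show m + ((3:ℕ):ℤ) = m + 3 by norm_num,
          show m + 3 + 1 = m + 4 by ring] at hd
        have mid1 := hmid 1 (by omega) (by omega)
        rw [show m + ((1:ℕ):ℤ) = m + 1 by norm_num,
          show m + 1 + 1 = m + 2 by ring] at mid1
        have mid2 := hmid 2 (by omega) (by omega)
        rw [show m + ((2:ℕ):ℤ) = m + 2 by norm_num,
          show m + 2 + 1 = m + 3 by ring] at mid2
        have hprev : bSeq x n r (m - 1) ≠ bSeq x n r m := by
          intro h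
          refine noTriple hx hP (m - 1) ?_ ?_
          · rwa [show m - 1 + 1 = m by ring]
          · rwa [show m - 1 + 1 = m by ring, show m - 1 + 2 = m + 1 by ring]
        have hnext : bSeq x n r (m + 4) ≠ bSeq x n r (m + 5) := by
          intro h
          refine noTriple hx hP (m + 3) ?_ ?_
          · rwa [show m + 3 + 1 = m + 4 by ring]
          · rwa [show m + 3 + 1 = m + 4 by ring, show m + 3 + 2 = m + 5 by ring]
        refine noPattern7 hx hP (m - 1) ?_ ?_ ?_ ?_ ?_ ?_
        · rw [show m - 1 + 1 = m by ring]; exact hprev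
        · rw [show m - 1 + 1 = m by ring, show m - 1 + 2 = m + 1 by ring]; exact hm
        · rw [show m - 1 + 2 = m + 1 by ring, show m - 1 + 3 = m + 2 by ring]; exact mid1
        · rw [show m - 1 + 3 = m + 2 by ring, show m - 1 + 4 = m + 3 by ring]; exact mid2
        · rw [show m - 1 + 4 = m + 3 by ring, show m - 1 + 5 = m + 4 by ring]; exact hd
        · rw [show m - 1 + 5 = m + 4 by ring, show m - 1 + 6 = m + 5 by ring]; exact hnext
      · -- 5 ≤ d
        have g : ∀ j : ℕ, 0 < j → j < d → bSeq x n r (m + j) ≠ bSeq x n r (m + j + 1) := hmid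
        have m1 := g 1 (by omega) (by omega)
        have m2 := g 2 (by omega) (by omega)
        have m3 := g 3 (by omega) (by omega)
        have m4 := g 4 (by omega) (by omega)
        rw [show m + ((1:ℕ):ℤ) = m + 1 by norm_num, show m + 1 + 1 = m + 2 by ring] at m1
        rw [show m + ((2:ℕ):ℤ) = m + 2 by norm_num, show m + 2 + 1 = m + 3 by ring] at m2
        rw [show m + ((3:ℕ):ℤ) = m + 3 by norm_num, show m + 3 + 1 = m + 4 by ring] at m3
        rw [show m + ((4:ℕ):ℤ) = m + 4 by norm_num, show m + 4 + 1 = m + 5 by ring] at m4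
        refine noAlt5 hx hP (m + 1) ?_ ?_ ?_ ?_
        · rwa [show m + 1 + 1 = m + 2 by ring]
        · rwa [show m + 1 + 1 = m + 2 by ring, show m + 1 + 2 = m + 3 by ring]
        · rwa [show m + 1 + 2 = m + 3 by ring, show m + 1 + 3 = m + 4 by ring]
        · rwa [show m + 1 + 3 = m + 4 by ring, show m + 1 + 4 = m + 5 by ring]

lemma equal_parity (hx : x ∈ morseShiftX) (hP : PProp x n r) (m m' : ℤ)
    (h : bSeq x n r m = bSeq x n r (m + 1)) (h' : bSeq x n r m' = bSeq x n r (m' + 1)) :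
    (m' - m) % 2 = 0 := by
  have key : ∀ a b : ℤ, a ≤ b → bSeq x n r a = bSeq x n r (a + 1) →
      bSeq x n r b = bSeq x n r (b + 1) → (b - a) % 2 = 0 := by
    intro a b hab ha hb
    by_contra hmod
    have hd : (((b - a).toNat : ℤ)) = b - a := Int.toNat_of_nonneg (by omega)
    refine no_odd_equal hx hP (b - a).toNat ?_ a ha ?_
    · rw [Nat.odd_iff]; omega
    · rw [show a + (((b - a).toNat : ℤ)) = b by omega]
      exact hb
  rcases le_total m m' with hle | hle
  · exact key m m' hle h h'
  · have := key m' m hle h' h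
    omega

lemma exists_equal (hx : x ∈ morseShiftX) (hP : PProp x n r) :
    ∃ m : ℤ, bSeq x n r m = bSeq x n r (m + 1) := by
  by_contra h
  push_neg at h
  exact noAlt5 hx hP 0 (h 0) (h (0 + 1)) (by have := h (0 + 2); rwa [show (0:ℤ)+2+1 = 0+3 by ring] at this)
    (by have := h (0 + 3); rwa [show (0:ℤ)+3+1 = 0+4 by ring] at this)

lemma claimA (hP : PProp x n r) (s : ℤ) :
    (readsWord x (r + s * 2 ^ n) (uWord (n + 1)) ∨
      readsWord x (r + s * 2 ^ n) (flipWord (uWord (n + 1)))) ↔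
    bSeq x n r s ≠ bSeq x n r (s + 1) := by
  rw [flip_uWord_succ, uWord_succ, readsWord_append, readsWord_append]
  rw [readsWord_pos_congr (show r + s * 2 ^ n + (((uWord n).length : ℤ))
    = r + (s + 1) * 2 ^ n by rw [lenU_cast]; ring)]
  rw [readsWord_pos_congr (show r + s * 2 ^ n + (((flipWord (uWord n)).length : ℤ))
    = r + (s + 1) * 2 ^ n by rw [lenF_cast]; ring)]
  constructor
  · rintro (⟨hU, hF⟩ | ⟨hF, hU⟩)
    · rw [readU_imp hU, readF_imp hF]; simp
    · rw [readF_imp hF, readU_imp hU]; simp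
  · intro hne
    cases hb : bSeq x n r s with
    | false =>
      left
      refine ⟨readU_of hP hb, readF_of hP ?_⟩
      rw [hb] at hne
      cases hb' : bSeq x n r (s + 1)
      · rw [hb'] at hne; simp at hne
      · rfl
    | true =>
      right
      refine ⟨readF_of hP hb, readU_of hP ?_⟩
      rw [hb] at hne
      cases hb' : bSeq x n r (s + 1)
      · rfl
      · rw [hb'] at hne; simp at hne

lemma claimB (hP : PProp x n r) (ε : ℤ) :
    PProp x (n + 1) (r + ε * 2 ^ n) ↔
    ∀ m : ℤ, bSeq x n r (ε + 2 * m) ≠ bSeq x n r (ε + 2 * m + 1) := by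
  have hpos : ∀ m : ℤ, r + ε * 2 ^ n + m * 2 ^ (n + 1) = r + (ε + 2 * m) * 2 ^ n := by
    intro m; rw [pow_succ]; ring
  constructor
  · intro h m
    have := h m
    rw [hpos m] at this
    exact (claimA hP (ε + 2 * m)).mp this
  · intro h m
    rw [hpos m]
    exact (claimA hP (ε + 2 * m)).mpr (h m)

end Step3

lemma reads_single (x : ℤ → Bool) (q : ℤ) (c : Bool) : readsWord x q [c] ↔ x q = c := by
  constructor
  · intro h
    have := h 0 (by norm_num)
    simpa using this
  · intro h j hj
    have : j = 0 := by simpa using hj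
    subst this
    simpa using h

lemma base_case (x : ℤ → Bool) : ∃! r : ℕ, r < 2 ^ 0 ∧ PProp x 0 ((r : ℤ)) := by
  refine ⟨0, ⟨by norm_num, ?_⟩, ?_⟩
  · intro m
    have hu : uWord 0 = [false] := rfl
    have hf : flipWord (uWord 0) = [true] := rfl
    rw [hf, hu, reads_single, reads_single]
    cases x ((0:ℕ) + m * 2 ^ 0)
    · exact Or.inl rfl
    · exact Or.inr rfl
  · rintro y ⟨hy, -⟩
    omega

lemma step_case {x : ℤ → Bool} (hx : x ∈ morseShiftX) (n : ℕ)
    (prev : ∃! r : ℕ, r < 2 ^ n ∧ PProp x n ((r : ℤ))) :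
    ∃! r : ℕ, r < 2 ^ (n + 1) ∧ PProp x (n + 1) ((r : ℤ)) := by
  obtain ⟨r, ⟨hrlt, hP⟩, huniq⟩ := prev
  obtain ⟨m0, hm0⟩ := exists_equal hx hP
  obtain ⟨ε0, hε01, hpar⟩ : ∃ e : ℤ, (e = 0 ∨ e = 1) ∧ (m0 + e) % 2 = 1 := by
    by_cases h2 : m0 % 2 = 0
    · exact ⟨1, Or.inr rfl, by omega⟩
    · exact ⟨0, Or.inl rfl, by omega⟩
  have hCond : ∀ m : ℤ, bSeq x n r (ε0 + 2 * m) ≠ bSeq x n r (ε0 + 2 * m + 1) := by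
    intro m heq
    have := equal_parity hx hP m0 (ε0 + 2 * m) hm0 heq
    omega
  have hPP : PProp x (n + 1) ((r : ℤ) + ε0 * 2 ^ n) := (claimB hP ε0).mpr hCond
  have h2n : (2:ℕ) ^ (n + 1) = 2 ^ n + 2 ^ n := by rw [pow_succ]; ring
  have hcast : ((r + ε0.toNat * 2 ^ n : ℕ) : ℤ) = (r : ℤ) + ε0 * 2 ^ n := by
    rcases hε01 with rfl | rfl <;> push_cast <;> ring
  refine ⟨r + ε0.toNat * 2 ^ n, ⟨?_, ?_⟩, ?_⟩
  · rcases hε01 with rfl | rfl <;> simp <;> omega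
  · rw [hcast]; exact hPP
  · rintro r'' ⟨hlt'', hP''⟩
    -- level-n property for r''
    have Q : ∀ m : ℤ, readsWord x ((r'' : ℤ) + m * 2 ^ n) (uWord n) ∨
        readsWord x ((r'' : ℤ) + m * 2 ^ n) (flipWord (uWord n)) := by
      intro m
      rcases Int.even_or_odd m with ⟨m', hm'⟩ | ⟨m', hm'⟩
      · have h := hP'' m'
        have hpos : (r'' : ℤ) + m' * 2 ^ (n + 1) = (r'' : ℤ) + m * 2 ^ n := by
          rw [pow_succ, hm']; ring
        rw [hpos] at h
        rcases h with h | h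
        · rw [uWord_succ, readsWord_append] at h; exact Or.inl h.1
        · rw [flip_uWord_succ, readsWord_append] at h; exact Or.inr h.1
      · have h := hP'' m'
        rcases h with h | h
        · rw [uWord_succ, readsWord_append] at h
          right
          have h2 := h.2
          rwa [show (r'' : ℤ) + m' * 2 ^ (n + 1) + (((uWord n).length : ℤ))
            = (r'' : ℤ) + m * 2 ^ n by rw [lenU_cast, pow_succ, hm']; ring] at h2
        · rw [flip_uWord_succ, readsWord_append] at h
          left
          have h2 := h.2
          rwa [show (r'' : ℤ) + m' * 2 ^ (n + 1) + (((flipWord (uWord n)).length : ℤ))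
            = (r'' : ℤ) + m * 2 ^ n by rw [lenF_cast, pow_succ, hm']; ring] at h2
    by_cases hsmall : r'' < 2 ^ n
    · -- ε'' = 0, r'' = r
      have hr''r : r'' = r := huniq r'' ⟨hsmall, Q⟩
      have hC0 : ∀ m : ℤ, bSeq x n r (0 + 2 * m) ≠ bSeq x n r (0 + 2 * m + 1) := by
        refine (claimB hP 0).mp ?_
        rw [show (r : ℤ) + 0 * 2 ^ n = ((r'' : ℕ) : ℤ) by rw [hr''r]; ring]
        exact hP''
      -- show ε0 = 0
      rcases hε01 with rfl | rfl
      · simpa using hr''r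
      · -- ε0 = 1 : m0 even, contradiction
        exfalso
        have hm0e : m0 % 2 = 0 := by omega
        obtain ⟨t, ht⟩ : ∃ t : ℤ, m0 = 2 * t := ⟨m0 / 2, by omega⟩
        have := hC0 t
        rw [show (0 : ℤ) + 2 * t = m0 by omega, show m0 + 1 = m0 + 1 from rfl] at this
        exact this hm0
    · -- ε'' = 1, r'' = r + 2^n
      have hr0lt : r'' - 2 ^ n < 2 ^ n := by omega
      have hcast0 : ((r'' - 2 ^ n : ℕ) : ℤ) = (r'' : ℤ) - 2 ^ n := by
        push_cast [Nat.cast_sub (by omega : 2 ^ n ≤ r'')]; ring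
      have hPn : PProp x n ((r'' - 2 ^ n : ℕ) : ℤ) := by
        intro m
        have hq := Q (m - 1)
        rwa [show (r'' : ℤ) + (m - 1) * 2 ^ n = ((r'' - 2 ^ n : ℕ) : ℤ) + m * 2 ^ n by
          rw [hcast0]; ring] at hq
      have hr0r : r'' - 2 ^ n = r := huniq (r'' - 2 ^ n) ⟨hr0lt, hPn⟩
      have hr'' : r'' = r + 2 ^ n := by omega
      have hC1 : ∀ m : ℤ, bSeq x n r (1 + 2 * m) ≠ bSeq x n r (1 + 2 * m + 1) := by
        refine (claimB hP 1).mp ?_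
        rw [show (r : ℤ) + 1 * 2 ^ n = ((r'' : ℕ) : ℤ) by rw [hr'']; push_cast; ring]
        exact hP''
      rcases hε01 with rfl | rfl
      · -- ε0 = 0 : m0 odd, contradiction
        exfalso
        have hm0o : m0 % 2 = 1 := by omega
        obtain ⟨t, ht⟩ : ∃ t : ℤ, m0 = 2 * t + 1 := ⟨m0 / 2, by omega⟩
        have := hC1 t
        rw [show (1 : ℤ) + 2 * t = m0 by omega] at this
        exact this hm0
      · simpa using hr''

lemma main_aux {x : ℤ → Bool} (hx : x ∈ morseShiftX) :
    ∀ n : ℕ, ∃! r : ℕ, r < 2 ^ n ∧ PProp x n ((r : ℤ)) := by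
  intro n
  induction n with
  | zero => exact base_case x
  | succ n ih => exact step_case hx n ih


/-- For each x ∈ X and k ∈ ℕ there is a unique offset r ∈ {0,…,2^{k+1}−1} such that on
each interval [r + m·2^{k+1}, r + (m+1)·2^{k+1}) the subword of x is u_k ū_k or ū_k u_k. -/
theorem morse_unique_partition_double :
    ∀ x ∈ morseShiftX, ∀ k : ℕ,
      ∃! r : ℕ, r < 2 ^ (k + 1) ∧ ∀ m : ℤ,
        readsWord x ((r : ℤ) + m * 2 ^ (k + 1)) (uWord k ++ flipWord (uWord k)) ∨
        readsWord x ((r : ℤ) + m * 2 ^ (k + 1)) (flipWord (uWord k) ++ uWord k) := by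
  intro x hx k
  have H := main_aux hx (k + 1)
  simp only [PProp] at H
  simp only [flip_uWord_succ] at H
  simp only [uWord_succ] at H
  exact H
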